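/- arXiv:1510.03166 — 2 statements merged into one kernel-verified Lean document; each statement's English description precedes it below -/
import Mathlib

section
/- If B ∈ HSP(A) and the natural clone homomorphism from Clo(A) onto Clo(B) is uniformly continuous, then every finitely generated subalgebra of B is a homomorphic image of a subalgebra of a finite power of A. -/
/-! Basic universal algebra over a signature. -/

structure Sig where
  ops : Type
  ar : ops → ℕ

structure Alg (σ : Sig) where
  carrier : Type
  interp : ∀ o : σ.ops, (Fin (σ.ar o) → carrier) → carrier

/-- Terms over the variables `x₁, …, xₙ` (represented by `Fin n`). -/
inductive Tm (σ : Sig) (n : ℕ) : Type where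
  | var : Fin n → Tm σ n
  | app : (o : σ.ops) → (Fin (σ.ar o) → Tm σ n) → Tm σ n

/-- Evaluation of a term in an algebra (the map `ν^A_n`). -/
def evalTm {σ : Sig} (A : Alg σ) {n : ℕ} : Tm σ n → (Fin n → A.carrier) → A.carrier
  | .var i, a => a i
  | .app o ts, a => A.interp o fun j => evalTm A (ts j) a

/-- The set `Clo_n(A)` of `n`-ary term operations of `A`. -/
def CloSet {σ : Sig} (A : Alg σ) (n : ℕ) : Set ((Fin n → A.carrier) → A.carrier) :=
  Set.range fun t : Tm σ n => evalTm A t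

def IsSubalg {σ : Sig} (A : Alg σ) (s : Set A.carrier) : Prop :=
  ∀ o : σ.ops, ∀ x : Fin (σ.ar o) → A.carrier, (∀ i, x i ∈ s) → A.interp o x ∈ s

/-- The algebra structure on a subalgebra. -/
def subAlg {σ : Sig} (A : Alg σ) (s : Set A.carrier) (hs : IsSubalg A s) : Alg σ where
  carrier := s
  interp o x := ⟨A.interp o fun i => (x i : A.carrier), hs o _ fun i => (x i).2⟩

def IsHom {σ : Sig} (A B : Alg σ) (h : A.carrier → B.carrier) : Prop :=
  ∀ o x, h (A.interp o x) = B.interp o fun i => h (x i)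

/-- Direct power `A^I`. -/
def powAlg {σ : Sig} (A : Alg σ) (I : Type) : Alg σ where
  carrier := I → A.carrier
  interp o x i := A.interp o fun j => x j i

/-- Product of a family of algebras. -/
def prodAlg {σ : Sig} {I : Type} (f : I → Alg σ) : Alg σ where
  carrier := ∀ i, (f i).carrier
  interp o x i := (f i).interp o fun j => x j i

/-- The subuniverse generated by a subset. -/
def genSet {σ : Sig} (A : Alg σ) (g : Set A.carrier) : Set A.carrier :=
  ⋂₀ {s | IsSubalg A s ∧ g ⊆ s}

lemma genSet_isSubalg {σ : Sig} (A : Alg σ) (g : Set A.carrier) :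
    IsSubalg A (genSet A g) := by
  intro o x hx
  rw [genSet, Set.mem_sInter]
  intro s hs
  exact hs.1 o x fun i => Set.mem_sInter.mp (hx i) s hs

/-- The subalgebra of `A` generated by finitely many elements `g 0, …, g (m-1)`. -/
def fgSub {σ : Sig} (A : Alg σ) (m : ℕ) (g : Fin m → A.carrier) : Alg σ :=
  subAlg A (genSet A (Set.range g)) (genSet_isSubalg A _)

/-- `B` is a homomorphic image of a subalgebra of a (possibly infinite) power of `A`. -/
def MemHSP {σ : Sig} (A B : Alg σ) : Prop :=
  ∃ (I : Type) (s : Set (powAlg A I).carrier) (hs : IsSubalg (powAlg A I) s)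
    (h : (subAlg (powAlg A I) s hs).carrier → B.carrier),
      IsHom (subAlg (powAlg A I) s hs) B h ∧ Function.Surjective h

/-- `B` is a homomorphic image of a subalgebra of a finite power of `A`. -/
def MemHSPfin {σ : Sig} (A B : Alg σ) : Prop :=
  ∃ (I : Type) (_ : Finite I) (s : Set (powAlg A I).carrier) (hs : IsSubalg (powAlg A I) s)
    (h : (subAlg (powAlg A I) s hs).carrier → B.carrier),
      IsHom (subAlg (powAlg A I) s hs) B h ∧ Function.Surjective h

/-- The uniformity of pointwise convergence on `X → Y`, `Y` discrete. -/
def ptUnif (X Y : Type) : UniformSpace (X → Y) :=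
  @Pi.uniformSpace X (fun _ => Y) fun _ => ⊥

/-- The uniformity of pointwise convergence on `Clo_n(A)`. -/
def cloUnif {σ : Sig} (A : Alg σ) (n : ℕ) : UniformSpace ↥(CloSet A n) :=
  (ptUnif (Fin n → A.carrier) A.carrier).comap Subtype.val

/-- `φ` is the natural clone homomorphism from `Clo(A)` to `Clo(B)`:
it sends the evaluation of each term in `A` to its evaluation in `B`
(in each arity `n ≥ 1`). -/
def IsNatHom {σ : Sig} (A B : Alg σ)
    (φ : ∀ n : ℕ, ↥(CloSet A (n + 1)) → ↥(CloSet B (n + 1))) : Prop :=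
  ∀ (n : ℕ) (t : Tm σ (n + 1)), (φ n ⟨evalTm A t, ⟨t, rfl⟩⟩ : _).val = evalTm B t

/-- Uniform continuity of a clone map, with respect to the uniformities of
pointwise convergence (equivalently, uniform continuity on the coproduct). -/
def NatUC {σ : Sig} (A B : Alg σ)
    (φ : ∀ n : ℕ, ↥(CloSet A (n + 1)) → ↥(CloSet B (n + 1))) : Prop :=
  ∀ n : ℕ, @UniformContinuous _ _ (cloUnif A (n + 1)) (cloUnif B (n + 1)) (φ n)

section Aux

lemma range_subset_genSet {σ : Sig} (A : Alg σ) (g : Set A.carrier) : g ⊆ genSet A g := by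
  intro x hx
  rw [genSet, Set.mem_sInter]
  intro s hs
  exact hs.2 hx

lemma genSet_mono {σ : Sig} (A : Alg σ) {g₁ g₂ : Set A.carrier} (h : g₁ ⊆ g₂) :
    genSet A g₁ ⊆ genSet A g₂ := by
  intro x hx
  rw [genSet, Set.mem_sInter]
  intro s hs
  exact Set.mem_sInter.mp hx s ⟨hs.1, h.trans hs.2⟩

lemma eval_mem_genSet {σ : Sig} (A : Alg σ) {n : ℕ} (g : Fin n → A.carrier) :
    ∀ t : Tm σ n, evalTm A t g ∈ genSet A (Set.range g) := by
  intro t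
  induction t with
  | var i => exact range_subset_genSet A _ ⟨i, rfl⟩
  | app o ts ih => exact genSet_isSubalg A _ o _ fun j => ih j

lemma mem_genSet_iff {σ : Sig} (A : Alg σ) {n : ℕ} (g : Fin n → A.carrier) (b : A.carrier) :
    b ∈ genSet A (Set.range g) ↔ ∃ t : Tm σ n, evalTm A t g = b := by
  constructor
  · intro hb
    refine Set.mem_sInter.mp hb {b | ∃ t : Tm σ n, evalTm A t g = b} ⟨?_, ?_⟩
    · intro o x hx
      choose ts hts using hx
      exact ⟨Tm.app o ts, by simp only [evalTm]; exact congrArg _ (funext hts)⟩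
    · rintro _ ⟨i, rfl⟩
      exact ⟨Tm.var i, rfl⟩
  · rintro ⟨t, rfl⟩
    exact eval_mem_genSet A g t

lemma evalTm_pow {σ : Sig} (A : Alg σ) (I : Type) {n : ℕ} (t : Tm σ n)
    (x : Fin n → (powAlg A I).carrier) (a : I) :
    evalTm (powAlg A I) t x a = evalTm A t (fun j => x j a) := by
  induction t with
  | var i => rfl
  | app o ts ih =>
    show (powAlg A I).interp o (fun j => evalTm (powAlg A I) (ts j) x) a = _
    simp only [powAlg]
    exact congrArg _ (funext fun j => ih j)

lemma key_uc {σ : Sig} (A B : Alg σ)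
    (φ : ∀ n : ℕ, ↥(CloSet A (n + 1)) → ↥(CloSet B (n + 1)))
    (hUC : NatUC A B φ) (m : ℕ) (g' : Fin (m + 1) → B.carrier) :
    ∃ I : Set (Fin (m + 1) → A.carrier), I.Finite ∧
      ∀ f₁ f₂ : ↥(CloSet A (m + 1)), (∀ a ∈ I, f₁.val a = f₂.val a) →
        (φ m f₁).val g' = (φ m f₂).val g' := by
  have hV : {q : ↥(CloSet B (m + 1)) × ↥(CloSet B (m + 1)) | q.1.val g' = q.2.val g'}
      ∈ @uniformity _ (cloUnif B (m + 1)) := by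
    rw [cloUnif, uniformity_comap]
    refine Filter.mem_comap.mpr
      ⟨{p : ((Fin (m + 1) → B.carrier) → B.carrier) ×
          ((Fin (m + 1) → B.carrier) → B.carrier) | p.1 g' = p.2 g'}, ?_, fun p hp => hp⟩
    rw [ptUnif, Pi.uniformity]
    refine Filter.mem_iInf_of_mem g' ?_
    refine Filter.mem_comap.mpr ⟨SetRel.id, ?_, fun p hp => hp⟩
    rw [bot_uniformity]
    exact Filter.mem_principal_self _
  have hU : (fun p : ↥(CloSet A (m + 1)) × ↥(CloSet A (m + 1)) => (φ m p.1, φ m p.2)) ⁻¹'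
      {q : ↥(CloSet B (m + 1)) × ↥(CloSet B (m + 1)) | q.1.val g' = q.2.val g'}
      ∈ @uniformity _ (cloUnif A (m + 1)) := hUC m hV
  rw [cloUnif, uniformity_comap, Filter.mem_comap] at hU
  obtain ⟨W, hW, hWU⟩ := hU
  rw [ptUnif, Pi.uniformity] at hW
  obtain ⟨I, hIfin, V, hV', hWeq⟩ := Filter.mem_iInf.mp hW
  refine ⟨I, hIfin, ?_⟩
  intro f₁ f₂ hagree
  have hmem : (Prod.map Subtype.val Subtype.val (f₁, f₂)) ∈ W := by
    rw [hWeq, Set.mem_iInter]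
    intro i
    obtain ⟨t, ht, hts⟩ := Filter.mem_comap.mp (hV' i)
    rw [bot_uniformity, Filter.mem_principal] at ht
    refine hts ?_
    refine ht ?_
    show (f₁.val i.val, f₂.val i.val) ∈ SetRel.id
    exact hagree i.val i.2
  exact hWU hmem

lemma term_congr {σ : Sig} (A B : Alg σ)
    (φ : ∀ n : ℕ, ↥(CloSet A (n + 1)) → ↥(CloSet B (n + 1)))
    (hφ : IsNatHom A B φ) (m : ℕ) (g' : Fin (m + 1) → B.carrier)
    (I : Set (Fin (m + 1) → A.carrier))
    (hkey : ∀ f₁ f₂ : ↥(CloSet A (m + 1)), (∀ a ∈ I, f₁.val a = f₂.val a) →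
        (φ m f₁).val g' = (φ m f₂).val g')
    (t₁ t₂ : Tm σ (m + 1)) (h : ∀ a ∈ I, evalTm A t₁ a = evalTm A t₂ a) :
    evalTm B t₁ g' = evalTm B t₂ g' := by
  have h1 := hkey ⟨evalTm A t₁, ⟨t₁, rfl⟩⟩ ⟨evalTm A t₂, ⟨t₂, rfl⟩⟩ h
  rw [hφ m t₁, hφ m t₂] at h1
  exact h1

end Aux

/-- If `B ∈ HSP(A)` and the natural clone homomorphism from `Clo(A)` onto
`Clo(B)` is uniformly continuous, then every finitely generated subalgebra of
`B` is a homomorphic image of a subalgebra of a finite power of `A`. -/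
theorem stmt_9 {σ : Sig} (A B : Alg σ) (hB : MemHSP A B)
    (φ : ∀ n : ℕ, ↥(CloSet A (n + 1)) → ↥(CloSet B (n + 1)))
    (hφ : IsNatHom A B φ) (hUC : NatUC A B φ) :
    ∀ (m : ℕ) (g : Fin m → B.carrier), MemHSPfin A (fgSub B m g) := by
  classical
  intro m g
  by_cases hne : (genSet B (Set.range g)).Nonempty
  · -- main case
    obtain ⟨b₀, hb₀⟩ := hne
    set g' : Fin (m + 1) → B.carrier := Fin.snoc g b₀ with hg'
    have hgg' : genSet B (Set.range g') = genSet B (Set.range g) := by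
      apply Set.Subset.antisymm
      · intro x hx
        refine Set.mem_sInter.mp hx _ ⟨genSet_isSubalg B _, ?_⟩
        rintro _ ⟨i, rfl⟩
        refine Fin.lastCases ?_ ?_ i
        · rw [hg', Fin.snoc_last]; exact hb₀
        · intro j; rw [hg', Fin.snoc_castSucc]
          exact range_subset_genSet B _ ⟨j, rfl⟩
      · refine genSet_mono B ?_
        rintro _ ⟨i, rfl⟩
        exact ⟨i.castSucc, by rw [hg', Fin.snoc_castSucc]⟩
    obtain ⟨I, hIfin, hkey⟩ := key_uc A B φ hUC m g'
    have hcong := term_congr A B φ hφ m g' I hkey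
    haveI : Finite ↥I := hIfin.to_subtype
    set F := ↥I
    set d : Fin (m + 1) → (powAlg A F).carrier := fun j a => a.val j with hd
    set s := genSet (powAlg A F) (Set.range d) with hsdef
    have hs := genSet_isSubalg (powAlg A F) (Set.range d)
    -- well-definedness
    have wd : ∀ t₁ t₂ : Tm σ (m + 1),
        evalTm (powAlg A F) t₁ d = evalTm (powAlg A F) t₂ d →
        evalTm B t₁ g' = evalTm B t₂ g' := by
      intro t₁ t₂ h
      refine hcong t₁ t₂ ?_
      intro a ha
      have h1 := congrFun h ⟨a, ha⟩
      rw [evalTm_pow, evalTm_pow] at h1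
      exact h1
    have hterm : ∀ x : ↥s, ∃ t : Tm σ (m + 1), evalTm (powAlg A F) t d = x.val :=
      fun x => (mem_genSet_iff (powAlg A F) d x.val).mp x.2
    choose T hT using hterm
    let h : ↥s → (fgSub B m g).carrier := fun x =>
      ⟨evalTm B (T x) g', by rw [← hgg']; exact eval_mem_genSet B g' (T x)⟩
    refine ⟨F, inferInstance, s, hs, h, ?_, ?_⟩
    · intro o x
      apply Subtype.ext
      show evalTm B (T _) g' = B.interp o fun i => evalTm B (T (x i)) g'
      have h1 : evalTm (powAlg A F) (Tm.app o (fun i => T (x i))) d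
          = ((subAlg (powAlg A F) s hs).interp o x).val := by
        show (powAlg A F).interp o (fun j => evalTm (powAlg A F) (T (x j)) d) = _
        exact congrArg _ (funext fun j => hT (x j))
      have h2 := wd _ _ ((hT _).trans h1.symm)
      rw [h2]
      rfl
    · rintro ⟨b, hb⟩
      rw [← hgg'] at hb
      obtain ⟨t, ht⟩ := (mem_genSet_iff B g' b).mp hb
      refine ⟨⟨evalTm (powAlg A F) t d, eval_mem_genSet (powAlg A F) d t⟩, Subtype.ext ?_⟩
      show evalTm B (T _) g' = b
      rw [wd _ t (hT _), ht]
  · -- degenerate case: the generated subalgebra is empty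
    have hempty : genSet B (Set.range g) = ∅ := Set.not_nonempty_iff_eq_empty.mp hne
    have hnull : ∀ o : σ.ops, σ.ar o ≠ 0 := by
      intro o h0
      have hmem := genSet_isSubalg B (Set.range g) o (fun i => ((i.cast h0).elim0))
        (fun i => ((i.cast h0).elim0))
      rw [hempty] at hmem
      exact hmem
    have hs : IsSubalg (powAlg A (Fin 0)) (∅ : Set (powAlg A (Fin 0)).carrier) := by
      intro o x hx
      have hi : (0 : ℕ) < σ.ar o := Nat.pos_of_ne_zero (hnull o)
      exact absurd (hx ⟨0, hi⟩) (Set.notMem_empty _)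
    refine ⟨Fin 0, inferInstance, ∅, hs, fun x => absurd x.2 (Set.notMem_empty _), ?_, ?_⟩
    · intro o x
      have hi : (0 : ℕ) < σ.ar o := Nat.pos_of_ne_zero (hnull o)
      exact absurd (x ⟨0, hi⟩).2 (Set.notMem_empty _)
    · rintro ⟨b, hb⟩
      rw [hempty] at hb
      exact absurd hb (Set.notMem_empty _)
end

section
/- Uniform Birkhoff theorem: for algebras A and B of the same type, B ∈ HSP(A) with the natural clone homomorphism Clo(A) → Clo(B) uniformly continuous if and only if every finitely generated subalgebra of B belongs to HSP_fin(A). -/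
section Aux

open Function Set Filter

variable {σ : Sig}

/-- Terms with variables in an arbitrary type `V`. -/
inductive Tm' (σ : Sig) (V : Type) : Type where
  | var : V → Tm' σ V
  | app : (o : σ.ops) → (Fin (σ.ar o) → Tm' σ V) → Tm' σ V

/-- Evaluation of a `Tm'` under a valuation. -/
def evalT (A : Alg σ) {V : Type} (v : V → A.carrier) : Tm' σ V → A.carrier
  | .var x => v x
  | .app o ts => A.interp o fun j => evalT A v (ts j)

/-- Renaming of variables. -/
def Tm'.rename {V W : Type} (ρ : V → W) : Tm' σ V → Tm' σ W
  | .var x => .var (ρ x)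
  | .app o ts => .app o fun j => (ts j).rename ρ

/-- All variables occurring in a term satisfy `P`. -/
def allVars {V : Type} (P : V → Prop) : Tm' σ V → Prop
  | .var x => P x
  | .app _ ts => ∀ j, allVars P (ts j)

lemma allVars_of_forall {V : Type} {P : V → Prop} (h : ∀ x, P x) :
    ∀ t : Tm' σ V, allVars P t := by
  intro t
  induction t with
  | var x => exact h x
  | app o ts ih => exact ih

lemma allVars_mono {V : Type} {P Q : V → Prop} (h : ∀ x, P x → Q x) :
    ∀ {t : Tm' σ V}, allVars P t → allVars Q t := by
  intro t
  induction t with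
  | var x => exact h x
  | app o ts ih => exact fun ht j => ih j (ht j)

lemma evalT_rename (A : Alg σ) {V W : Type} (ρ : V → W) (v : W → A.carrier) (t : Tm' σ V) :
    evalT A v (t.rename ρ) = evalT A (v ∘ ρ) t := by
  induction t with
  | var x => rfl
  | app o ts ih => exact congrArg (A.interp o) (funext ih)

lemma evalT_congr (A : Alg σ) {V : Type} {v w : V → A.carrier} {t : Tm' σ V}
    (h : allVars (fun x => v x = w x) t) : evalT A v t = evalT A w t := by
  induction t with
  | var x => exact h
  | app o ts ih => exact congrArg (A.interp o) (funext fun j => ih j (h j))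

/-- Translation `Tm σ n → Tm' σ (Fin n)`. -/
def toTm' {n : ℕ} : Tm σ n → Tm' σ (Fin n)
  | .var i => .var i
  | .app o ts => .app o fun j => toTm' (ts j)

lemma evalT_toTm' (A : Alg σ) {n : ℕ} (t : Tm σ n) (a : Fin n → A.carrier) :
    evalT A a (toTm' t) = evalTm A t a := by
  induction t with
  | var i => rfl
  | app o ts ih => exact congrArg (A.interp o) (funext ih)

/-- Translation `Tm' σ (Fin n) → Tm σ n`. -/
def ofTm' {n : ℕ} : Tm' σ (Fin n) → Tm σ n
  | .var i => .var i
  | .app o ts => .app o fun j => ofTm' (ts j)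

lemma evalTm_ofTm' (A : Alg σ) {n : ℕ} (t : Tm' σ (Fin n)) (a : Fin n → A.carrier) :
    evalTm A (ofTm' t) a = evalT A a t := by
  induction t with
  | var i => rfl
  | app o ts ih => exact congrArg (A.interp o) (funext ih)

lemma evalT_hom {A B : Alg σ} {h : A.carrier → B.carrier} (hh : IsHom A B h)
    {V : Type} (v : V → A.carrier) (t : Tm' σ V) :
    h (evalT A v t) = evalT B (h ∘ v) t := by
  induction t with
  | var x => rfl
  | app o ts ih => exact (hh o _).trans (congrArg (B.interp o) (funext ih))

lemma evalTm_hom {A B : Alg σ} {h : A.carrier → B.carrier} (hh : IsHom A B h)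
    {n : ℕ} (t : Tm σ n) (a : Fin n → A.carrier) :
    h (evalTm A t a) = evalTm B t (h ∘ a) := by
  induction t with
  | var i => rfl
  | app o ts ih => exact (hh o _).trans (congrArg (B.interp o) (funext ih))

lemma isHom_subAlg_val (A : Alg σ) (s : Set A.carrier) (hs : IsSubalg A s) :
    IsHom (subAlg A s hs) A Subtype.val := fun _ _ => rfl

lemma isHom_proj (A : Alg σ) (I : Type) (i : I) :
    IsHom (powAlg A I) A (fun x => x i) := fun _ _ => rfl

lemma subset_genSet (A : Alg σ) (g : Set A.carrier) : g ⊆ genSet A g :=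
  fun _ hx => Set.mem_sInter.2 fun _ hs => hs.2 hx

lemma genSet_min {A : Alg σ} {g s : Set A.carrier} (hs : IsSubalg A s) (hg : g ⊆ s) :
    genSet A g ⊆ s := fun _ hx => Set.mem_sInter.1 hx s ⟨hs, hg⟩

lemma evalT_mem_genSet {A : Alg σ} {S : Set A.carrier} {V : Type} {v : V → A.carrier}
    {t : Tm' σ V} (h : allVars (fun x => v x ∈ genSet A S) t) :
    evalT A v t ∈ genSet A S := by
  induction t with
  | var x => exact h
  | app o ts ih => exact genSet_isSubalg A S o _ fun j => ih j (h j)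

lemma evalTm_mem_genSet {A : Alg σ} {S : Set A.carrier} {n : ℕ} {a : Fin n → A.carrier}
    (t : Tm σ n) (h : ∀ i, a i ∈ genSet A S) : evalTm A t a ∈ genSet A S := by
  induction t with
  | var i => exact h i
  | app o ts ih => exact genSet_isSubalg A S o _ fun j => ih j

lemma genSet_mem_iff {A : Alg σ} {S : Set A.carrier} {x : A.carrier} :
    x ∈ genSet A S ↔ ∃ t : Tm' σ ↥S, x = evalT A Subtype.val t := by
  constructor
  · intro hx
    refine genSet_min (s := {x | ∃ t : Tm' σ ↥S, x = evalT A Subtype.val t}) ?_ ?_ hx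
    · intro o y hy
      choose ts hts using hy
      exact ⟨.app o ts, congrArg (A.interp o) (funext hts)⟩
    · exact fun y hy => ⟨.var ⟨y, hy⟩, rfl⟩
  · rintro ⟨t, rfl⟩
    refine evalT_mem_genSet ?_
    exact allVars_of_forall (fun y => subset_genSet A S y.2) t

lemma genSet_range_iff {A : Alg σ} {m : ℕ} {g : Fin m → A.carrier} {x : A.carrier} :
    x ∈ genSet A (Set.range g) ↔ ∃ t : Tm σ m, x = evalTm A t g := by
  constructor
  · intro hx
    obtain ⟨t, rfl⟩ := genSet_mem_iff.1 hx
    choose ρ hρ using fun y : ↥(Set.range g) => (y.2 : ∃ i, g i = (y : A.carrier))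
    refine ⟨ofTm' (t.rename ρ), ?_⟩
    rw [evalTm_ofTm', evalT_rename]
    exact evalT_congr A (allVars_of_forall (fun y => (hρ y).symm) t)
  · rintro ⟨t, rfl⟩
    exact evalTm_mem_genSet t fun i => subset_genSet A _ ⟨i, rfl⟩

end Aux
section Aux2

open Function Set Filter

variable {σ : Sig}

/-- List of variables occurring in a term. -/
def varList {V : Type} : Tm' σ V → List V
  | .var x => [x]
  | .app _ ts => (List.ofFn fun j => varList (ts j)).flatten

lemma allVars_varList {V : Type} (t : Tm' σ V) : allVars (· ∈ varList t) t := by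
  induction t with
  | var x => exact List.mem_singleton.2 rfl
  | app o ts ih =>
    intro j
    refine allVars_mono (fun x hx => ?_) (ih j)
    exact List.mem_flatten.2 ⟨varList (ts j), List.mem_ofFn.2 ⟨j, rfl⟩, hx⟩

/-- The key lemma: if every finitely generated subalgebra of `B` is in
`HSP_fin(A)`, then any A-valid equation between `B`-variable terms holds in `B`. -/
lemma key_transfer {A B : Alg σ}
    (hR : ∀ (m : ℕ) (g : Fin m → B.carrier), MemHSPfin A (fgSub B m g))
    (t t' : Tm' σ B.carrier)
    (hid : ∀ f : B.carrier → A.carrier, evalT A f t = evalT A f t') :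
    evalT B id t = evalT B id t' := by
  classical
  set L : List B.carrier := varList t ++ varList t' with hL
  set m := L.length
  set g : Fin m → B.carrier := L.get with hg
  set S : Set B.carrier := genSet B (Set.range g) with hS
  have hvarS : ∀ x ∈ L, x ∈ S := by
    intro x hx
    obtain ⟨i, hi⟩ := List.mem_iff_get.1 hx
    exact subset_genSet B _ ⟨i, hi⟩
  have hall : allVars (· ∈ S) t :=
    allVars_mono (fun x hx => hvarS x (List.mem_append_left _ hx)) (allVars_varList t)
  have hall' : allVars (· ∈ S) t' :=
    allVars_mono (fun x hx => hvarS x (List.mem_append_right _ hx)) (allVars_varList t')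
  obtain ⟨I₀, hI₀, s, hs, h₀, hhom, hsurj⟩ := hR m g
  have hu : ∀ y, h₀ (surjInv hsurj y) = y := rightInverse_surjInv hsurj
  have hvB : IsHom (fgSub B m g) B Subtype.val :=
    isHom_subAlg_val B _ (genSet_isSubalg B _)
  have htS : evalT B id t ∈ S := evalT_mem_genSet hall
  set d : ↥s := surjInv hsurj ⟨evalT B id t, htS⟩ with hd
  set w : B.carrier → ↥s :=
    fun β => if hβ : β ∈ S then surjInv hsurj ⟨β, hβ⟩ else d with hw
  -- computing the image back in B
  have keyval : ∀ (r : Tm' σ B.carrier), allVars (· ∈ S) r →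
      Subtype.val (h₀ (evalT (subAlg (powAlg A I₀) s hs) w r)) = evalT B id r := by
    intro r hr
    rw [evalT_hom hhom w r, evalT_hom hvB]
    refine evalT_congr B (allVars_mono (fun x hx => ?_) hr)
    show Subtype.val (h₀ (w x)) = x
    have hwx : w x = surjInv hsurj ⟨x, hx⟩ := dif_pos hx
    rw [hwx, hu ⟨x, hx⟩]
  -- the two evaluations in s agree
  have hsame : evalT (subAlg (powAlg A I₀) s hs) w t
      = evalT (subAlg (powAlg A I₀) s hs) w t' := by
    apply Subtype.ext
    rw [show (Subtype.val (evalT (subAlg (powAlg A I₀) s hs) w t) : (powAlg A I₀).carrier)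
          = evalT (powAlg A I₀) (Subtype.val ∘ w) t from
        evalT_hom (isHom_subAlg_val (powAlg A I₀) s hs) w t,
      show (Subtype.val (evalT (subAlg (powAlg A I₀) s hs) w t') : (powAlg A I₀).carrier)
          = evalT (powAlg A I₀) (Subtype.val ∘ w) t' from
        evalT_hom (isHom_subAlg_val (powAlg A I₀) s hs) w t']
    funext i₀
    have p1 := evalT_hom (isHom_proj A I₀ i₀) (Subtype.val ∘ w) t
    have p2 := evalT_hom (isHom_proj A I₀ i₀) (Subtype.val ∘ w) t'
    exact p1.trans ((hid _).trans p2.symm)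
  calc evalT B id t = _ := (keyval t hall).symm
    _ = _ := by rw [hsame]
    _ = evalT B id t' := keyval t' hall'
end Aux2
section Aux3

open Function Set Filter
open scoped Uniformity

variable {σ : Sig}

lemma key_transfer_tm {A B : Alg σ}
    (hR : ∀ (m : ℕ) (g : Fin m → B.carrier), MemHSPfin A (fgSub B m g))
    {k : ℕ} (t t' : Tm σ k) (b : Fin k → B.carrier)
    (hid : ∀ f : B.carrier → A.carrier, evalTm A t (f ∘ b) = evalTm A t' (f ∘ b)) :
    evalTm B t b = evalTm B t' b := by
  have h := key_transfer hR ((toTm' t).rename b) ((toTm' t').rename b) (fun f => by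
    rw [evalT_rename, evalT_rename, evalT_toTm', evalT_toTm']
    exact hid f)
  rwa [evalT_rename, evalT_rename, evalT_toTm', evalT_toTm', Function.id_comp] at h

/-- Basic entourage of `cloUnif` determined by a set of tuples. -/
def cloEnt (A : Alg σ) (k : ℕ) (F : Set (Fin k → A.carrier)) :
    Set (↥(CloSet A k) × ↥(CloSet A k)) :=
  (Prod.map (Subtype.val) (Subtype.val)) ⁻¹' (⋂ a ∈ F, {pq | pq.1 a = pq.2 a})

lemma mem_cloEnt {A : Alg σ} {k : ℕ} {F : Set (Fin k → A.carrier)}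
    {pq : ↥(CloSet A k) × ↥(CloSet A k)} :
    pq ∈ cloEnt A k F ↔ ∀ a ∈ F, pq.1.val a = pq.2.val a := by
  simp [cloEnt]

lemma ptUnif_eq (X Y : Type) :
    𝓤[ptUnif X Y] = ⨅ x : X, Filter.comap (fun pq : (X → Y) × (X → Y) => (pq.1 x, pq.2 x)) (𝓟 (SetRel.id : SetRel Y Y)) :=
  @Pi.uniformity X (fun _ => Y) (fun _ => ⊥)

lemma cloEnt_mem {A : Alg σ} {k : ℕ} {F : Set (Fin k → A.carrier)} (hF : F.Finite) :
    cloEnt A k F ∈ 𝓤[cloUnif A k] := by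
  rw [cloUnif, uniformity_comap]
  refine Filter.mem_comap.2 ⟨_, ?_, subset_rfl⟩
  rw [ptUnif_eq]
  refine (Filter.biInter_mem hF).2 fun a _ => ?_
  refine Filter.mem_iInf_of_mem a ?_
  exact Filter.mem_comap.2 ⟨SetRel.id, Filter.mem_principal_self _, fun pq h => h⟩

lemma cloEnt_extract {A : Alg σ} {k : ℕ} {V : Set (↥(CloSet A k) × ↥(CloSet A k))}
    (hV : V ∈ 𝓤[cloUnif A k]) :
    ∃ F : Set (Fin k → A.carrier), F.Finite ∧ cloEnt A k F ⊆ V := by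
  rw [cloUnif, uniformity_comap] at hV
  obtain ⟨W, hW, hWV⟩ := Filter.mem_comap.1 hV
  rw [ptUnif_eq] at hW
  obtain ⟨F, hFfin, Vi, hVi, hWeq⟩ := Filter.mem_iInf.1 hW
  refine ⟨F, hFfin, fun pq hpq => ?_⟩
  apply hWV
  show Prod.map Subtype.val Subtype.val pq ∈ W
  rw [hWeq]
  refine Set.mem_iInter.2 fun a => ?_
  obtain ⟨u, hu, huV⟩ := Filter.mem_comap.1 (hVi a)
  apply huV
  exact Filter.mem_principal.1 hu (SetRel.mem_id.2 (mem_cloEnt.1 hpq a.1 a.2))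

/-- For each tuple `g` over `B` there is a finite set of tuples over `A`
controlling the value at `g` of every induced term operation. -/
lemma exists_finite_support {A B : Alg σ}
    (hR : ∀ (m : ℕ) (g : Fin m → B.carrier), MemHSPfin A (fgSub B m g))
    (k : ℕ) (g : Fin k → B.carrier) :
    ∃ F : Set (Fin k → A.carrier), F.Finite ∧
      ∀ t t' : Tm σ k, (∀ a ∈ F, evalTm A t a = evalTm A t' a) →
        evalTm B t g = evalTm B t' g := by
  obtain ⟨I₀, hI₀, s, hs, h₀, hhom, hsurj⟩ := hR k g
  haveI := hI₀
  have hu := rightInverse_surjInv hsurj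
  set gg : Fin k → (fgSub B k g).carrier := fun v => ⟨g v, subset_genSet B _ ⟨v, rfl⟩⟩ with hgg
  set x : Fin k → ↥s := fun v => surjInv hsurj (gg v) with hx
  refine ⟨Set.range (fun i₀ : I₀ => fun v => (Subtype.val (x v)) i₀), Set.finite_range _, ?_⟩
  intro t t' hagree
  have hveq : evalTm (subAlg (powAlg A I₀) s hs) t x
      = evalTm (subAlg (powAlg A I₀) s hs) t' x := by
    apply Subtype.ext
    rw [evalTm_hom (isHom_subAlg_val (powAlg A I₀) s hs) t x,
        evalTm_hom (isHom_subAlg_val (powAlg A I₀) s hs) t' x]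
    funext i₀
    rw [evalTm_hom (isHom_proj A I₀ i₀), evalTm_hom (isHom_proj A I₀ i₀)]
    exact hagree _ ⟨i₀, rfl⟩
  have hvB : IsHom (fgSub B k g) B Subtype.val :=
    isHom_subAlg_val B _ (genSet_isSubalg B _)
  have key : ∀ r : Tm σ k,
      Subtype.val (h₀ (evalTm (subAlg (powAlg A I₀) s hs) r x)) = evalTm B r g := by
    intro r
    rw [evalTm_hom hhom r x, evalTm_hom hvB]
    erw [show Subtype.val ∘ (h₀ ∘ x) = g from funext fun v => by
      show Subtype.val (h₀ (x v)) = g v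
      rw [hx]
      show Subtype.val (h₀ (surjInv hsurj (gg v))) = g v
      rw [hu (gg v)]]
  rw [← key t, ← key t', hveq]

end Aux3
section Aux4

open Function Set Filter
open scoped Uniformity

variable {σ : Sig}

lemma memHSPfin_congr {A B : Alg σ} {s s' : Set B.carrier} (hss : s = s')
    {hs : IsSubalg B s} {hs' : IsSubalg B s'} :
    MemHSPfin A (subAlg B s hs) → MemHSPfin A (subAlg B s' hs') := by
  subst hss; exact id

lemma memHSPfin_of_empty {A B : Alg σ} {m : ℕ} {g : Fin m → B.carrier}
    (hempty : genSet B (Set.range g) = ∅) : MemHSPfin A (fgSub B m g) := by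
  have hs : IsSubalg (powAlg A Unit) (∅ : Set (powAlg A Unit).carrier) := by
    intro o x hx
    rcases Nat.eq_zero_or_pos (σ.ar o) with h0 | hpos
    · exfalso
      have hmem := genSet_isSubalg B (Set.range g) o (fun i => (Fin.cast h0 i).elim0)
        (fun i => (Fin.cast h0 i).elim0)
      rw [hempty] at hmem
      exact hmem
    · exact absurd (hx ⟨0, hpos⟩) (Set.notMem_empty _)
  refine ⟨Unit, inferInstance, ∅, hs, fun x => absurd x.2 (Set.notMem_empty _), ?_, ?_⟩
  · intro o x
    exact absurd ((subAlg (powAlg A Unit) ∅ hs).interp o x).2 (Set.notMem_empty _)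
  · intro b
    exact absurd b.2 (Set.eq_empty_iff_forall_notMem.1 hempty _)

lemma fwd_main {A B : Alg σ}
    (φ : ∀ n : ℕ, ↥(CloSet A (n + 1)) → ↥(CloSet B (n + 1)))
    (hnat : IsNatHom A B φ) (huc : NatUC A B φ)
    (n : ℕ) (g : Fin (n + 1) → B.carrier) : MemHSPfin A (fgSub B (n + 1) g) := by
  classical
  -- extract a finite support F from uniform continuity
  have hV : cloEnt B (n + 1) {g} ∈ 𝓤[cloUnif B (n + 1)] :=
    cloEnt_mem (Set.finite_singleton g)
  have hU := ((@uniformContinuous_def _ _ (cloUnif A (n+1)) (cloUnif B (n+1)) (φ n)).1 (huc n)) _ hV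
  obtain ⟨F, hF, hFsub⟩ := cloEnt_extract hU
  -- agreement on F implies agreement at g
  have wd : ∀ t t' : Tm σ (n + 1), (∀ a ∈ F, evalTm A t a = evalTm A t' a) →
      evalTm B t g = evalTm B t' g := by
    intro t t' h
    have hp : ((⟨evalTm A t, ⟨t, rfl⟩⟩ : ↥(CloSet A (n + 1))),
        (⟨evalTm A t', ⟨t', rfl⟩⟩ : ↥(CloSet A (n + 1)))) ∈ cloEnt A (n + 1) F :=
      mem_cloEnt.2 h
    have h2 := mem_cloEnt.1 (hFsub hp) g (Set.mem_singleton _)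
    rwa [hnat n t, hnat n t'] at h2
  -- build the finite-power representation
  haveI : Finite ↥F := hF.to_subtype
  set π : Fin (n + 1) → (powAlg A ↥F).carrier := fun v a => a.val v with hπ
  set s : Set (powAlg A ↥F).carrier := genSet (powAlg A ↥F) (Set.range π) with hsdef
  have hs : IsSubalg (powAlg A ↥F) s := genSet_isSubalg _ _
  choose rep hrep using fun x : ↥s => genSet_range_iff.1 x.2
  have hcoord : ∀ (t : Tm σ (n + 1)) (a : ↥F),
      evalTm (powAlg A ↥F) t π a = evalTm A t a.val := by
    intro t a
    have h1 := evalTm_hom (isHom_proj A ↥F a) t π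
    exact h1.trans (congrArg (evalTm A t) (funext fun v => rfl))
  have wd' : ∀ t t' : Tm σ (n + 1),
      evalTm (powAlg A ↥F) t π = evalTm (powAlg A ↥F) t' π →
      evalTm B t g = evalTm B t' g := by
    intro t t' h
    refine wd t t' fun a ha => ?_
    have h3 := congrFun h (⟨a, ha⟩ : ↥F)
    rwa [hcoord, hcoord] at h3
  refine ⟨↥F, hF.to_subtype, s, hs,
    fun x => ⟨evalTm B (rep x) g,
      evalTm_mem_genSet _ (fun i => subset_genSet B _ ⟨i, rfl⟩)⟩, ?_, ?_⟩
  · intro o x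
    apply Subtype.ext
    show evalTm B (rep ((subAlg (powAlg A ↥F) s hs).interp o x)) g
      = B.interp o fun i => evalTm B (rep (x i)) g
    refine wd' _ (.app o fun i => rep (x i)) ?_
    rw [← hrep ((subAlg (powAlg A ↥F) s hs).interp o x)]
    show (powAlg A ↥F).interp o (fun i => Subtype.val (x i))
      = (powAlg A ↥F).interp o fun j => evalTm (powAlg A ↥F) (rep (x j)) π
    exact congrArg _ (funext fun i => hrep (x i))
  · intro b
    obtain ⟨t, ht⟩ := genSet_range_iff.1 b.2
    refine ⟨⟨evalTm (powAlg A ↥F) t π,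
      evalTm_mem_genSet t (fun v => subset_genSet _ _ ⟨v, rfl⟩)⟩, ?_⟩
    apply Subtype.ext
    show evalTm B (rep _) g = b.val
    rw [ht]
    apply wd'
    rw [← hrep ⟨evalTm (powAlg A ↥F) t π,
      evalTm_mem_genSet t (fun v => subset_genSet _ _ ⟨v, rfl⟩)⟩]

lemma fwd {A B : Alg σ}
    (φ : ∀ n : ℕ, ↥(CloSet A (n + 1)) → ↥(CloSet B (n + 1)))
    (hnat : IsNatHom A B φ) (huc : NatUC A B φ) :
    ∀ (m : ℕ) (g : Fin m → B.carrier), MemHSPfin A (fgSub B m g) := by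
  intro m g
  cases m with
  | succ m' => exact fwd_main φ hnat huc m' g
  | zero =>
    by_cases hne : (genSet B (Set.range g)).Nonempty
    · obtain ⟨b₀, hb₀⟩ := hne
      have hmain := fwd_main φ hnat huc 0 (fun _ : Fin 1 => b₀)
      have hset : genSet B (Set.range (fun _ : Fin 1 => b₀)) = genSet B (Set.range g) := by
        apply subset_antisymm
        · exact genSet_min (genSet_isSubalg B _) (by rintro x ⟨i, rfl⟩; exact hb₀)
        · exact genSet_min (genSet_isSubalg B _) (by rintro x ⟨i, _⟩; exact i.elim0)
      exact memHSPfin_congr hset hmain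
    · exact memHSPfin_of_empty (Set.not_nonempty_iff_eq_empty.1 hne)

end Aux4
section Aux5

open Function Set Filter
open scoped Uniformity

variable {σ : Sig}

/-- Identity transfer: an identity valid in `A` holds in `B`. -/
lemma ident_transfer {A B : Alg σ}
    (hR : ∀ (m : ℕ) (g : Fin m → B.carrier), MemHSPfin A (fgSub B m g))
    {k : ℕ} {t t' : Tm σ k} (h : evalTm A t = evalTm A t') (b : Fin k → B.carrier) :
    evalTm B t b = evalTm B t' b :=
  key_transfer_tm hR t t' b fun f => congrFun h (f ∘ b)

/-- `B ∈ HSP(A)` from the finitely-generated condition. -/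
lemma bwd_hsp {A B : Alg σ}
    (hR : ∀ (m : ℕ) (g : Fin m → B.carrier), MemHSPfin A (fgSub B m g)) :
    MemHSP A B := by
  classical
  set I : Type := B.carrier → A.carrier with hI
  set π : B.carrier → (powAlg A I).carrier := fun β f => f β with hπdef
  set s : Set (powAlg A I).carrier := genSet (powAlg A I) (Set.range π) with hsdef
  have hs : IsSubalg (powAlg A I) s := genSet_isSubalg _ _
  choose rep hrep using fun x : ↥s => genSet_mem_iff.1 x.2
  choose ρ hρ using fun y : ↥(Set.range π) => (y.2 : ∃ b, π b = (y : (powAlg A I).carrier))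
  -- coordinates of evaluation
  have hcoord : ∀ (f : I) (r : Tm' σ ↥(Set.range π)),
      evalT A (f ∘ ρ) r = (evalT (powAlg A I) Subtype.val r) f := by
    intro f r
    rw [evalT_hom (isHom_proj A I f) Subtype.val r]
    refine evalT_congr A (allVars_of_forall (fun y => ?_) r)
    exact congrFun (hρ y) f
  -- well-definedness
  have wd' : ∀ t t' : Tm' σ ↥(Set.range π),
      evalT (powAlg A I) Subtype.val t = evalT (powAlg A I) Subtype.val t' →
      evalT B ρ t = evalT B ρ t' := by
    intro t t' h
    have hkey := key_transfer hR (t.rename ρ) (t'.rename ρ) (fun f => by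
      rw [evalT_rename, evalT_rename, hcoord, hcoord, h])
    rwa [evalT_rename, evalT_rename, Function.id_comp] at hkey
  refine ⟨I, s, hs, fun x => evalT B ρ (rep x), ?_, ?_⟩
  · intro o x
    show evalT B ρ (rep ((subAlg (powAlg A I) s hs).interp o x))
      = B.interp o fun i => evalT B ρ (rep (x i))
    refine wd' _ (.app o fun i => rep (x i)) ?_
    rw [← hrep ((subAlg (powAlg A I) s hs).interp o x)]
    show (powAlg A I).interp o (fun i => Subtype.val (x i))
      = (powAlg A I).interp o fun j => evalT (powAlg A I) Subtype.val (rep (x j))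
    exact congrArg _ (funext fun i => hrep (x i))
  · intro β
    have hmem : π β ∈ s := subset_genSet _ _ ⟨β, rfl⟩
    refine ⟨⟨π β, hmem⟩, ?_⟩
    have h1 : evalT B ρ (rep ⟨π β, hmem⟩)
        = evalT B ρ (.var ⟨π β, ⟨β, rfl⟩⟩) := by
      apply wd'
      rw [← hrep ⟨π β, hmem⟩]
      rfl
    have h2 : ρ ⟨π β, ⟨β, rfl⟩⟩ = β := by
      have hkey := key_transfer hR (.var (ρ ⟨π β, ⟨β, rfl⟩⟩)) (.var β)
        (fun f => congrFun (hρ ⟨π β, ⟨β, rfl⟩⟩) f)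
      exact hkey
    exact h1.trans h2

/-- Construction of the natural clone homomorphism. -/
lemma bwd_phi {A B : Alg σ}
    (hR : ∀ (m : ℕ) (g : Fin m → B.carrier), MemHSPfin A (fgSub B m g)) :
    ∃ φ : ∀ n : ℕ, ↥(CloSet A (n + 1)) → ↥(CloSet B (n + 1)),
      IsNatHom A B φ ∧ NatUC A B φ := by
  classical
  refine ⟨fun n p => ⟨evalTm B p.2.choose, ⟨p.2.choose, rfl⟩⟩, ?_, ?_⟩
  · -- IsNatHom
    intro n t
    show evalTm B (Exists.choose _) = evalTm B t
    funext b
    refine ident_transfer hR ?_ b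
    exact Exists.choose_spec (⟨t, rfl⟩ : ∃ t' : Tm σ (n+1), evalTm A t' = evalTm A t)
  · -- NatUC
    intro n
    refine (@uniformContinuous_def _ _ (cloUnif A (n+1)) (cloUnif B (n+1)) _).2 ?_
    intro V hV
    obtain ⟨G, hG, hGsub⟩ := cloEnt_extract hV
    choose Fg hFgfin hFg using exists_finite_support hR (n + 1)
    have hFfin : (⋃ g ∈ G, Fg g).Finite := hG.biUnion fun g _ => hFgfin g
    refine Filter.mem_of_superset (cloEnt_mem hFfin) ?_
    intro pq hpq
    apply hGsub
    refine mem_cloEnt.2 fun g hg => ?_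
    show evalTm B pq.1.2.choose g = evalTm B pq.2.2.choose g
    refine hFg g _ _ fun a ha => ?_
    have h1 : evalTm A pq.1.2.choose = pq.1.val := pq.1.2.choose_spec
    have h2 : evalTm A pq.2.2.choose = pq.2.val := pq.2.2.choose_spec
    rw [h1, h2]
    exact mem_cloEnt.1 hpq a (Set.mem_biUnion hg ha)

end Aux5
/-- Uniform Birkhoff theorem: `B ∈ HSP(A)` with the natural clone homomorphism
`Clo(A) → Clo(B)` uniformly continuous if and only if every finitely generated
subalgebra of `B` belongs to `HSP_fin(A)`. -/
theorem stmt_10 {σ : Sig} (A B : Alg σ) :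
    (MemHSP A B ∧ ∃ φ : ∀ n : ℕ, ↥(CloSet A (n + 1)) → ↥(CloSet B (n + 1)),
        IsNatHom A B φ ∧ NatUC A B φ) ↔
      ∀ (m : ℕ) (g : Fin m → B.carrier), MemHSPfin A (fgSub B m g) := by
  constructor
  · rintro ⟨-, φ, hnat, huc⟩
    exact fwd φ hnat huc
  · intro hR
    exact ⟨bwd_hsp hR, bwd_phi hR⟩
end
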